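/- Let T, i ≥ 1 be integers and 0 < ξ < 1. Let σ ∈ {L,R}^T be an arbitrary prefix of a pure Markov strategy for Player 2. Consider the first T rounds of the Big Match where Player 1 follows σ1^{i,ξ} and Player 2 follows σ. Let p_win be the probability that Player 1 stops the game (plays R) and wins (Player 2 plays R in the same round), and p_loss the probability that Player 1 stops the game and loses. Then: (1) p_loss ≤ (1−ξ)^i·ξ³ + (1−ξ)^{−1}·p_win; (2) for any 0 < δ ≤ 1/2 and any T > i/(2δ), if dens(σ) ≤ 1/2 − δ then p_win + p_loss ≥ ξ⁴. -/

import Mathlib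

noncomputable section

namespace Paper

/-- The two actions of each player in the Big Match. -/
inductive Act
  | L
  | R
deriving DecidableEq

/-- The density of the action `L` in the first `T` terms of the sequence `σ`
of actions of Player 2. -/
def dens (σ : ℕ → Act) (T : ℕ) : ℝ :=
  (((Finset.range T).filter fun t => σ t = Act.L).card : ℝ) / T

/-- The counter used as memory by the base strategy `σ1^{i,ξ}` at round `t`:
the number of earlier rounds in which Player 2 played `L` minus the number of
earlier rounds in which Player 2 played `R`. -/
def counter (σ : ℕ → Act) (t : ℕ) : ℤ :=
  (((Finset.range t).filter fun s => σ s = Act.L).card : ℤ) -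
    (((Finset.range t).filter fun s => σ s = Act.R).card : ℤ)

/-- The probability with which the base strategy `σ1^{i,ξ}` plays `R` (stopping
the game) at round `t` against the fixed sequence `σ`: if the counter equals
`j` then this probability is `ξ⁴ (1-ξ)^(i+j)` when `i + j > 0` and `ξ⁴` when
`i + j ≤ 0`. -/
def qstop (ξ : ℝ) (i : ℕ) (σ : ℕ → Act) (t : ℕ) : ℝ :=
  if 0 < (i : ℤ) + counter σ t then ξ ^ 4 * (1 - ξ) ^ ((i : ℤ) + counter σ t)
  else ξ ^ 4

/-- The probability that, within the first `T` rounds, Player 1 (following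
`σ1^{i,ξ}` against the fixed sequence `σ`) stops the game and wins, i.e. stops
in a round in which Player 2 plays `R`. -/
def pwin (ξ : ℝ) (i : ℕ) (σ : ℕ → Act) (T : ℕ) : ℝ :=
  ∑ t ∈ (Finset.range T).filter (fun t => σ t = Act.R),
    (∏ s ∈ Finset.range t, (1 - qstop ξ i σ s)) * qstop ξ i σ t

/-- The probability that, within the first `T` rounds, Player 1 (following
`σ1^{i,ξ}` against the fixed sequence `σ`) stops the game and loses, i.e. stops
in a round in which Player 2 plays `L`. -/
def ploss (ξ : ℝ) (i : ℕ) (σ : ℕ → Act) (T : ℕ) : ℝ :=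
  ∑ t ∈ (Finset.range T).filter (fun t => σ t = Act.L),
    (∏ s ∈ Finset.range t, (1 - qstop ξ i σ s)) * qstop ξ i σ t

def fpot (ξ : ℝ) (m : ℤ) : ℝ :=
  if 1 ≤ m then ξ ^ 3 * (1 - ξ) ^ m else ξ ^ 3 + ξ ^ 4 / (1 - ξ ^ 4) * (-m)

lemma fpot_nonneg {ξ : ℝ} (hξ0 : 0 < ξ) (hξ1 : ξ < 1) (m : ℤ) : 0 ≤ fpot ξ m := by
  have h1 : (0:ℝ) < 1 - ξ := by linarith
  have h4 : (0:ℝ) < 1 - ξ ^ 4 := by nlinarith [pow_lt_one₀ hξ0.le hξ1 (show 4 ≠ 0 by norm_num)]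
  unfold fpot
  split
  · positivity
  · rename_i h
    have hm : 0 ≤ -(m:ℝ) := by
      have h' : (m:ℝ) ≤ 0 := by exact_mod_cast (by omega : m ≤ 0)
      linarith
    have hB : 0 ≤ ξ ^ 4 / (1 - ξ ^ 4) := div_nonneg (by positivity) h4.le
    push_cast
    nlinarith [pow_pos hξ0 3]

lemma keyL {ξ : ℝ} (hξ0 : 0 < ξ) (hξ1 : ξ < 1) (m : ℤ) :
    (if 0 < m then ξ ^ 4 * (1 - ξ) ^ m else ξ ^ 4) +
      (1 - (if 0 < m then ξ ^ 4 * (1 - ξ) ^ m else ξ ^ 4)) * fpot ξ (m + 1) ≤ fpot ξ m := by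
  have h1 : (0:ℝ) < 1 - ξ := by linarith
  have h1ne : (1:ℝ) - ξ ≠ 0 := ne_of_gt h1
  have h4 : (0:ℝ) < 1 - ξ ^ 4 := by nlinarith [pow_lt_one₀ hξ0.le hξ1 (show 4 ≠ 0 by norm_num)]
  have h4p : (0:ℝ) < ξ ^ 4 := by positivity
  rcases lt_trichotomy m 0 with hm | rfl | hm
  · -- m ≤ -1
    have e1 : fpot ξ (m + 1) = ξ ^ 3 + ξ ^ 4 / (1 - ξ ^ 4) * (-(m:ℝ) - 1) := by
      rw [fpot, if_neg (by omega : ¬ (1:ℤ) ≤ m + 1)]; push_cast; ring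
    have e2 : fpot ξ m = ξ ^ 3 + ξ ^ 4 / (1 - ξ ^ 4) * (-m) := by
      rw [fpot, if_neg (by omega : ¬ (1:ℤ) ≤ m)]
    rw [if_neg (by omega : ¬ (0:ℤ) < m), e1, e2]
    have hB : ξ ^ 4 / (1 - ξ ^ 4) * (1 - ξ ^ 4) = ξ ^ 4 := div_mul_cancel₀ _ (ne_of_gt h4)
    have hBpos : 0 ≤ ξ ^ 4 / (1 - ξ ^ 4) := div_nonneg h4p.le h4.le
    have hk : (0:ℝ) ≤ -(m:ℝ) - 1 := by
      have h' : (m:ℝ) ≤ -1 := by exact_mod_cast (by omega : m ≤ -1)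
      linarith
    push_cast
    nlinarith [mul_nonneg (mul_nonneg h4p.le hBpos) hk, pow_pos hξ0 7]
  · -- m = 0
    have e1 : fpot ξ ((0:ℤ) + 1) = ξ ^ 3 * (1 - ξ) := by
      rw [fpot, if_pos (by omega : (1:ℤ) ≤ 0 + 1)]; norm_num
    have e2 : fpot ξ (0:ℤ) = ξ ^ 3 := by
      rw [fpot, if_neg (by omega : ¬ (1:ℤ) ≤ 0)]; norm_num
    rw [if_neg (by omega : ¬ (0:ℤ) < 0), e1, e2]
    nlinarith [pow_pos hξ0 7]
  · -- m ≥ 1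
    have hx : (0:ℝ) < (1 - ξ) ^ m := zpow_pos h1 m
    have e1 : fpot ξ (m + 1) = ξ ^ 3 * ((1 - ξ) ^ m * (1 - ξ)) := by
      rw [fpot, if_pos (by omega : (1:ℤ) ≤ m + 1), zpow_add_one₀ h1ne]
    have e2 : fpot ξ m = ξ ^ 3 * (1 - ξ) ^ m := by
      rw [fpot, if_pos (by omega : (1:ℤ) ≤ m)]
    rw [if_pos hm, e1, e2]
    set x := (1 - ξ) ^ m with hxdef
    nlinarith [mul_nonneg (mul_nonneg (pow_pos hξ0 7).le h1.le) (mul_pos hx hx).le]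

lemma keyR {ξ : ℝ} (hξ0 : 0 < ξ) (hξ1 : ξ < 1) (m : ℤ) :
    (1 - (if 0 < m then ξ ^ 4 * (1 - ξ) ^ m else ξ ^ 4)) * fpot ξ (m - 1) ≤
      fpot ξ m + (1 - ξ)⁻¹ * (if 0 < m then ξ ^ 4 * (1 - ξ) ^ m else ξ ^ 4) := by
  have h1 : (0:ℝ) < 1 - ξ := by linarith
  have h1ne : (1:ℝ) - ξ ≠ 0 := ne_of_gt h1
  have h4 : (0:ℝ) < 1 - ξ ^ 4 := by nlinarith [pow_lt_one₀ hξ0.le hξ1 (show 4 ≠ 0 by norm_num)]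
  have h4p : (0:ℝ) < ξ ^ 4 := by positivity
  rcases lt_or_ge 0 m with hm | hm
  · -- m ≥ 1
    have hx : (0:ℝ) < (1 - ξ) ^ (m - 1) := zpow_pos h1 _
    have hfm1 : fpot ξ (m - 1) = ξ ^ 3 * (1 - ξ) ^ (m - 1) := by
      rcases eq_or_lt_of_le (show (1:ℤ) ≤ m by omega) with h | h
      · rw [show m - 1 = 0 by omega]; norm_num [fpot]
      · rw [fpot, if_pos (by omega : (1:ℤ) ≤ m - 1)]
    have hfm : fpot ξ m = ξ ^ 3 * ((1 - ξ) ^ (m - 1) * (1 - ξ)) := by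
      rw [fpot, if_pos (by omega : (1:ℤ) ≤ m)]
      congr 1
      rw [← zpow_add_one₀ h1ne]; ring_nf
    have hstep : (1 - ξ) ^ m = (1 - ξ) ^ (m - 1) * (1 - ξ) := by
      rw [← zpow_add_one₀ h1ne]; ring_nf
    rw [if_pos hm, hfm1, hfm, hstep]
    set x := (1 - ξ) ^ (m - 1) with hxdef
    have hinv : (1 - ξ)⁻¹ * (ξ ^ 4 * (x * (1 - ξ))) = ξ ^ 4 * x := by
      field_simp
    rw [hinv]
    nlinarith [mul_nonneg (mul_nonneg (pow_pos hξ0 7).le h1.le) (mul_pos hx hx).le]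
  · -- m ≤ 0
    have hfm1 : fpot ξ (m - 1) = fpot ξ m + ξ ^ 4 / (1 - ξ ^ 4) := by
      rw [fpot, fpot, if_neg (by omega : ¬ (1:ℤ) ≤ m - 1), if_neg (by omega : ¬ (1:ℤ) ≤ m)]
      push_cast; ring
    rw [if_neg (by omega : ¬ (0:ℤ) < m), hfm1]
    have hB : ξ ^ 4 / (1 - ξ ^ 4) * (1 - ξ ^ 4) = ξ ^ 4 := div_mul_cancel₀ _ (ne_of_gt h4)
    have hg : 0 ≤ fpot ξ m := fpot_nonneg hξ0 hξ1 m
    have hu1 : (1:ℝ) ≤ (1 - ξ)⁻¹ := by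
      rw [le_inv_comm₀ one_pos h1]; linarith
    nlinarith [mul_nonneg h4p.le hg, mul_nonneg (by linarith : (0:ℝ) ≤ (1-ξ)⁻¹ - 1) h4p.le]



/-- survival probability -/
def Pprod (ξ : ℝ) (i : ℕ) (σ : ℕ → Act) (t : ℕ) : ℝ :=
  ∏ s ∈ Finset.range t, (1 - qstop ξ i σ s)

lemma counter_zero (σ : ℕ → Act) : counter σ 0 = 0 := by simp [counter]

lemma counter_succ (σ : ℕ → Act) (t : ℕ) :
    counter σ (t + 1) = counter σ t + (if σ t = Act.L then 1 else -1) := by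
  unfold counter
  rw [Finset.range_add_one, Finset.filter_insert, Finset.filter_insert]
  have hnot : ∀ p : ℕ → Prop, ∀ h : DecidablePred p, t ∉ (Finset.range t).filter p :=
    fun p h hm => Finset.notMem_range_self (Finset.mem_of_mem_filter _ hm)
  cases h : σ t <;>
    simp [h, Finset.card_insert_of_notMem (hnot _ _)] <;> ring

lemma qstop_pos {ξ : ℝ} (hξ0 : 0 < ξ) (hξ1 : ξ < 1) (i : ℕ) (σ : ℕ → Act) (t : ℕ) :
    0 < qstop ξ i σ t := by
  have h1 : (0:ℝ) < 1 - ξ := by linarith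
  unfold qstop; split
  · exact mul_pos (by positivity) (zpow_pos h1 _)
  · positivity

lemma qstop_le {ξ : ℝ} (hξ0 : 0 < ξ) (hξ1 : ξ < 1) (i : ℕ) (σ : ℕ → Act) (t : ℕ) :
    qstop ξ i σ t ≤ ξ ^ 4 := by
  have h1 : (0:ℝ) < 1 - ξ := by linarith
  unfold qstop; split
  · rename_i h
    have h2 : (1 - ξ) ^ ((i:ℤ) + counter σ t) ≤ 1 := zpow_le_one₀ h1 (by linarith) h.le
    nlinarith [pow_pos hξ0 4]
  · exact le_refl _

lemma Pprod_pos {ξ : ℝ} (hξ0 : 0 < ξ) (hξ1 : ξ < 1) (i : ℕ) (σ : ℕ → Act) (t : ℕ) :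
    0 < Pprod ξ i σ t := by
  have h4 : ξ ^ 4 < 1 := pow_lt_one₀ hξ0.le hξ1 (by norm_num)
  exact Finset.prod_pos fun s _ => by linarith [qstop_le hξ0 hξ1 i σ s]

lemma Pprod_le_one {ξ : ℝ} (hξ0 : 0 < ξ) (hξ1 : ξ < 1) (i : ℕ) (σ : ℕ → Act) (t : ℕ) :
    Pprod ξ i σ t ≤ 1 := by
  have h4 : ξ ^ 4 < 1 := pow_lt_one₀ hξ0.le hξ1 (by norm_num)
  exact Finset.prod_le_one (fun s _ => by linarith [qstop_le hξ0 hξ1 i σ s])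
    (fun s _ => by linarith [qstop_pos hξ0 hξ1 i σ s])

lemma Pprod_succ (ξ : ℝ) (i : ℕ) (σ : ℕ → Act) (t : ℕ) :
    Pprod ξ i σ (t + 1) = Pprod ξ i σ t * (1 - qstop ξ i σ t) :=
  Finset.prod_range_succ _ t

lemma ploss_succ (ξ : ℝ) (i : ℕ) (σ : ℕ → Act) (n : ℕ) :
    ploss ξ i σ (n + 1) = ploss ξ i σ n +
      (if σ n = Act.L then Pprod ξ i σ n * qstop ξ i σ n else 0) := by
  unfold ploss Pprod
  rw [Finset.sum_filter, Finset.sum_filter, Finset.sum_range_succ]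

lemma pwin_succ (ξ : ℝ) (i : ℕ) (σ : ℕ → Act) (n : ℕ) :
    pwin ξ i σ (n + 1) = pwin ξ i σ n +
      (if σ n = Act.R then Pprod ξ i σ n * qstop ξ i σ n else 0) := by
  unfold pwin Pprod
  rw [Finset.sum_filter, Finset.sum_filter, Finset.sum_range_succ]

lemma total_eq (ξ : ℝ) (i : ℕ) (σ : ℕ → Act) (n : ℕ) :
    pwin ξ i σ n + ploss ξ i σ n = 1 - Pprod ξ i σ n := by
  induction n with
  | zero => simp [pwin, ploss, Pprod]
  | succ n ih =>
    rw [pwin_succ, ploss_succ, Pprod_succ]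
    cases h : σ n <;> simp [h] <;> linarith [ih]


lemma part1_aux {ξ : ℝ} (hξ0 : 0 < ξ) (hξ1 : ξ < 1) (i : ℕ) (σ : ℕ → Act) (n : ℕ) :
    ploss ξ i σ n + Pprod ξ i σ n * fpot ξ ((i : ℤ) + counter σ n) ≤
      fpot ξ (i : ℤ) + (1 - ξ)⁻¹ * pwin ξ i σ n := by
  induction n with
  | zero => simp [ploss, pwin, Pprod, counter_zero]
  | succ n ih =>
    have hP := Pprod_pos hξ0 hξ1 i σ n
    have hqdef : qstop ξ i σ n =
        (if 0 < (i:ℤ) + counter σ n then ξ ^ 4 * (1 - ξ) ^ ((i:ℤ) + counter σ n) else ξ ^ 4) :=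
      rfl
    rw [ploss_succ, pwin_succ, Pprod_succ, counter_succ]
    cases h : σ n
    · -- L
      have kL := keyL hξ0 hξ1 ((i:ℤ) + counter σ n)
      rw [← hqdef] at kL
      have key2 : Pprod ξ i σ n * qstop ξ i σ n +
          Pprod ξ i σ n * (1 - qstop ξ i σ n) * fpot ξ ((i:ℤ) + counter σ n + 1) ≤
          Pprod ξ i σ n * fpot ξ ((i:ℤ) + counter σ n) := by
        nlinarith [kL, hP]
      simp only [reduceCtorEq, reduceIte]
      rw [show (i:ℤ) + (counter σ n + 1) = (i:ℤ) + counter σ n + 1 by ring]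
      linarith [ih, key2]
    · -- R
      have kR := keyR hξ0 hξ1 ((i:ℤ) + counter σ n)
      rw [← hqdef] at kR
      have key2 : Pprod ξ i σ n * (1 - qstop ξ i σ n) * fpot ξ ((i:ℤ) + counter σ n - 1) ≤
          Pprod ξ i σ n * fpot ξ ((i:ℤ) + counter σ n) +
            (1 - ξ)⁻¹ * (Pprod ξ i σ n * qstop ξ i σ n) := by
        nlinarith [kR, hP]
      simp only [reduceCtorEq, reduceIte]
      rw [show (i:ℤ) + (counter σ n + -1) = (i:ℤ) + counter σ n - 1 by ring]
      linarith [ih, key2]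

/-- properties of the base strategy `σ1^{i,ξ}`.  Let `T, i ≥ 1`,
`0 < ξ < 1` and let `σ` be an arbitrary prefix (of length `T`) of a pure Markov
strategy of Player 2 in the Big Match.  Then
(1) `p_loss ≤ (1-ξ)^i ξ³ + (1-ξ)⁻¹ p_win`, and
(2) for any `0 < δ ≤ 1/2` and `T > i/(2δ)`, if `dens σ ≤ 1/2 - δ` then
`p_win + p_loss ≥ ξ⁴`. -/
theorem stmt8 (T i : ℕ) (hT : 1 ≤ T) (hi : 1 ≤ i)
    (ξ : ℝ) (hξ0 : 0 < ξ) (hξ1 : ξ < 1) (σ : ℕ → Act) :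
    ploss ξ i σ T ≤ (1 - ξ) ^ i * ξ ^ 3 + (1 - ξ)⁻¹ * pwin ξ i σ T ∧
    ∀ δ : ℝ, 0 < δ → δ ≤ 1 / 2 → (i : ℝ) / (2 * δ) < T →
      dens σ T ≤ 1 / 2 - δ → ξ ^ 4 ≤ pwin ξ i σ T + ploss ξ i σ T := by
  have h1 : (0:ℝ) < 1 - ξ := by linarith
  have h4 : ξ ^ 4 < 1 := pow_lt_one₀ hξ0.le hξ1 (by norm_num)
  constructor
  · -- part 1
    have aux := part1_aux hξ0 hξ1 i σ T
    have hP := Pprod_pos hξ0 hξ1 i σ T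
    have hf := fpot_nonneg hξ0 hξ1 ((i:ℤ) + counter σ T)
    have hfi : fpot ξ (i:ℤ) = (1 - ξ) ^ i * ξ ^ 3 := by
      rw [fpot, if_pos (by exact_mod_cast hi : (1:ℤ) ≤ (i:ℕ))]
      rw [zpow_natCast]; ring
    rw [hfi] at aux
    nlinarith [mul_nonneg hP.le hf]
  · -- part 2
    intro δ hδ0 hδ1 hTδ hdens
    obtain ⟨T', rfl⟩ : ∃ T', T = T' + 1 := ⟨T - 1, by omega⟩
    -- counter at T is very negative
    have hLR : (((Finset.range (T'+1)).filter fun t => σ t = Act.L).card : ℤ) +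
        (((Finset.range (T'+1)).filter fun t => σ t = Act.R).card : ℤ) = (T' + 1 : ℕ) := by
      have := Finset.card_filter_add_card_filter_not
        (s := Finset.range (T'+1)) (p := fun t => σ t = Act.L)
      have heq : (Finset.range (T'+1)).filter (fun t => ¬ σ t = Act.L) =
          (Finset.range (T'+1)).filter (fun t => σ t = Act.R) := by
        apply Finset.filter_congr
        intro x _
        cases σ x <;> simp
      rw [heq, Finset.card_range] at this
      exact_mod_cast congrArg (Nat.cast : ℕ → ℤ) this
    have hTpos : (0:ℝ) < ((T' + 1 : ℕ) : ℝ) := by positivity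
    have hLle : ((((Finset.range (T'+1)).filter fun t => σ t = Act.L).card : ℝ)) ≤
        (1/2 - δ) * ((T' + 1 : ℕ) : ℝ) := by
      rw [dens] at hdens
      rw [div_le_iff₀ hTpos] at hdens
      exact hdens
    have hiT : (i : ℝ) < 2 * δ * ((T' + 1 : ℕ) : ℝ) := by
      rw [div_lt_iff₀ (by linarith)] at hTδ
      calc (i:ℝ) < ((T'+1 : ℕ):ℝ) * (2 * δ) := hTδ
        _ = 2 * δ * ((T'+1:ℕ):ℝ) := by ring
    have hcT : (i : ℤ) + counter σ (T' + 1) < 0 := by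
      have hcr : ((counter σ (T' + 1) : ℤ) : ℝ) ≤ -(2 * δ) * ((T'+1:ℕ):ℝ) := by
        have hc : (counter σ (T'+1) : ℝ) =
            2 * ((((Finset.range (T'+1)).filter fun t => σ t = Act.L).card : ℝ)) -
              ((T'+1:ℕ):ℝ) := by
          have : ((counter σ (T'+1) : ℤ) : ℝ) =
              ((((Finset.range (T'+1)).filter fun t => σ t = Act.L).card : ℤ) : ℝ) -
              ((((Finset.range (T'+1)).filter fun t => σ t = Act.R).card : ℤ) : ℝ) := by
            rw [counter]; push_cast; ring
          rw [this]
          have hLR' := congrArg (Int.cast : ℤ → ℝ) hLR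
          push_cast at hLR' ⊢
          linarith
        rw [hc]
        linarith
      have : ((i:ℤ) + counter σ (T'+1) : ℝ) < 0 := by
        push_cast
        nlinarith
      exact_mod_cast this
    have hcT' : ¬ (0 < (i : ℤ) + counter σ T') := by
      have := counter_succ σ T'
      cases h : σ T' <;> rw [h] at this <;> simp at this <;> omega
    have hqT' : qstop ξ i σ T' = ξ ^ 4 := by rw [qstop, if_neg hcT']
    have htot := total_eq ξ i σ (T' + 1)
    rw [Pprod_succ, hqT'] at htot
    have hPle := Pprod_le_one hξ0 hξ1 i σ T'
    have hPpos := Pprod_pos hξ0 hξ1 i σ T'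
    nlinarith [htot, hPle, hPpos]
end Paper
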